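/- For X tangent to M_r, writing Y = X - η(X)ξ one has φ'Y = -νX - η(X)N (octonion products), and the structure tensor φ' differs from the naturally induced tensor φ (given by φX = JX - η(X)ν) on vectors orthogonal to ξ. -/

import Mathlib

/- Common setup: ℝ⁷ ≅ pure imaginary octonions 𝔆₊ (0-based indices: eᵢ ↦ i-1),
   octonion cross product x × y = xy + ⟨x,y⟩·1 given by the Fano triples
   (e₁e₂=e₃, e₁e₄=e₅, e₁e₆=e₇, e₂e₅=e₇, e₃e₄=e₇, e₃e₅=e₆, e₂e₆=e₄),
   the hypersurfaces M_r = S⁶ ∩ {x₇ = r}, the unit normal ν of M_r in S⁶,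
   the vector field ξ = -N × ν, its dual 1-form η and dη
   (with the convention dη(X,Y) = ½(Xη(Y) - Yη(X) - η([X,Y]))). -/

noncomputable section

open scoped RealInnerProductSpace

abbrev E7 : Type := EuclideanSpace ℝ (Fin 7)
abbrev E6 : Type := EuclideanSpace ℝ (Fin 6)

/-- Octonion cross product on pure imaginary octonions 𝔆₊ ≅ ℝ⁷. -/
def cross (u v : E7) : E7 := WithLp.toLp 2 fun k =>
  if k = 0 then u 1 * v 2 - u 2 * v 1 + (u 3 * v 4 - u 4 * v 3) + (u 5 * v 6 - u 6 * v 5)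
  else if k = 1 then u 2 * v 0 - u 0 * v 2 + (u 4 * v 6 - u 6 * v 4) + (u 5 * v 3 - u 3 * v 5)
  else if k = 2 then u 0 * v 1 - u 1 * v 0 + (u 3 * v 6 - u 6 * v 3) + (u 4 * v 5 - u 5 * v 4)
  else if k = 3 then u 4 * v 0 - u 0 * v 4 + (u 6 * v 2 - u 2 * v 6) + (u 1 * v 5 - u 5 * v 1)
  else if k = 4 then u 0 * v 3 - u 3 * v 0 + (u 6 * v 1 - u 1 * v 6) + (u 5 * v 2 - u 2 * v 5)
  else if k = 5 then u 6 * v 0 - u 0 * v 6 + (u 2 * v 4 - u 4 * v 2) + (u 3 * v 1 - u 1 * v 3)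
  else u 0 * v 5 - u 5 * v 0 + (u 1 * v 4 - u 4 * v 1) + (u 2 * v 3 - u 3 * v 2)

/-- The hypersurface M_r = S⁶ ∩ {x₇ = r} = {Σᵢ₌₁⁶ xᵢeᵢ + re₇ : Σᵢ₌₁⁶ xᵢ² = 1 - r²}. -/
def Mr (r : ℝ) : Set E7 := {x | x 6 = r ∧ ∑ i : Fin 6, x i.castSucc ^ 2 = 1 - r ^ 2}

/-- The unit normal ν of M_r in S⁶ : ν_x = (r/√(1-r²)) Σᵢ₌₁⁶ xᵢeᵢ - √(1-r²) e₇. -/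
def nu (r : ℝ) (x : E7) : E7 := WithLp.toLp 2 fun i =>
  if i = 6 then -Real.sqrt (1 - r ^ 2) else (r / Real.sqrt (1 - r ^ 2)) * x i

/-- ξ = -N × ν = (1/√(1-r²))(x₆e₁ + x₅e₂ + x₄e₃ - x₃e₄ - x₂e₅ - x₁e₆). -/
def xi (r : ℝ) (x : E7) : E7 := WithLp.toLp 2 fun i =>
  (1 / Real.sqrt (1 - r ^ 2)) *
    (if i = 0 then x 5 else if i = 1 then x 4 else if i = 2 then x 3
     else if i = 3 then -x 2 else if i = 4 then -x 1 else if i = 5 then -x 0 else 0)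

/-- The 1-form η dual to ξ:
η = (1/√(1-r²))(x₆dx₁ + x₅dx₂ + x₄dx₃ - x₃dx₄ - x₂dx₅ - x₁dx₆). -/
def eta (r : ℝ) (x v : E7) : ℝ :=
  (1 / Real.sqrt (1 - r ^ 2)) *
    (x 5 * v 0 + x 4 * v 1 + x 3 * v 2 - x 2 * v 3 - x 1 * v 4 - x 0 * v 5)

/-- dη = -(2/√(1-r²))(dx₁∧dx₆ + dx₂∧dx₅ + dx₃∧dx₄), with the convention
dη(X,Y) = ½(Xη(Y) - Yη(X) - η([X,Y])), i.e. (dxᵢ∧dxⱼ)(u,v) = ½(uᵢvⱼ - uⱼvᵢ). -/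
def deta (r : ℝ) (u v : E7) : ℝ :=
  -(1 / Real.sqrt (1 - r ^ 2)) *
    (u 0 * v 5 - u 5 * v 0 + (u 1 * v 4 - u 4 * v 1) + (u 2 * v 3 - u 3 * v 2))

/-- The tangent space T_xM_r = {v : v₇ = 0, ⟨v,x⟩ = 0} (as a predicate). -/
def TangentMr (x v : E7) : Prop := v 6 = 0 ∧ ⟪v, x⟫ = 0

/-- Octonion multiplication on 𝔆 = ℝ ⊕ 𝔆₊. -/
def omul (x y : ℝ × E7) : ℝ × E7 :=
  (x.1 * y.1 - ⟪x.2, y.2⟫, x.1 • y.2 + y.1 • x.2 + cross x.2 y.2)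

/-- The naturally induced structure tensor φX = JX - η(X)ν, J_x v = x × v. -/
def phi (r : ℝ) (x v : E7) : E7 := cross x v - eta r x v • nu r x

/-- for X tangent to M_r and Y = X - η(X)ξ one has
φ'Y = -νX - η(X)N (octonion products, computed in 𝔆 = ℝ ⊕ 𝔆₊), and the
tensor φ' differs from the naturally induced tensor φ on vectors ⊥ ξ. -/

lemma cross_sub (u v w : E7) : cross u (v - w) = cross u v - cross u w := by
  ext k
  simp only [cross, PiLp.sub_apply]
  split_ifs <;> ring

lemma cross_smul (u : E7) (c : ℝ) (v : E7) : cross u (c • v) = c • cross u v := by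
  ext k
  simp only [cross, PiLp.smul_apply, smul_eq_mul]
  split_ifs <;> ring

lemma cross_apply0 (u v : E7) : cross u v 0 =
    u 1 * v 2 - u 2 * v 1 + (u 3 * v 4 - u 4 * v 3) + (u 5 * v 6 - u 6 * v 5) := rfl
lemma cross_apply1 (u v : E7) : cross u v 1 =
    u 2 * v 0 - u 0 * v 2 + (u 4 * v 6 - u 6 * v 4) + (u 5 * v 3 - u 3 * v 5) := rfl
lemma cross_apply2 (u v : E7) : cross u v 2 =
    u 0 * v 1 - u 1 * v 0 + (u 3 * v 6 - u 6 * v 3) + (u 4 * v 5 - u 5 * v 4) := rfl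
lemma cross_apply3 (u v : E7) : cross u v 3 =
    u 4 * v 0 - u 0 * v 4 + (u 6 * v 2 - u 2 * v 6) + (u 1 * v 5 - u 5 * v 1) := rfl
lemma cross_apply4 (u v : E7) : cross u v 4 =
    u 0 * v 3 - u 3 * v 0 + (u 6 * v 1 - u 1 * v 6) + (u 5 * v 2 - u 2 * v 5) := rfl
lemma cross_apply5 (u v : E7) : cross u v 5 =
    u 6 * v 0 - u 0 * v 6 + (u 2 * v 4 - u 4 * v 2) + (u 3 * v 1 - u 1 * v 3) := rfl
lemma cross_apply6 (u v : E7) : cross u v 6 =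
    u 0 * v 5 - u 5 * v 0 + (u 1 * v 4 - u 4 * v 1) + (u 2 * v 3 - u 3 * v 2) := rfl

set_option maxHeartbeats 2000000 in
theorem stmt16 (r : ℝ) (hr : -1 < r ∧ r < 1) :
    (∀ x ∈ Mr r, ∀ X : E7, TangentMr x X →
      ((0 : ℝ), -cross (nu r x) (X - eta r x X • xi r x))
        = -omul (0, nu r x) (0, X) - eta r x X • ((0 : ℝ), x)) ∧
    ∃ y ∈ Mr r, ∃ X : E7, TangentMr y X ∧ ⟪X, xi r y⟫ = 0 ∧
      phi r y X ≠ -cross (nu r y) X := by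
  obtain ⟨hr1, hr2⟩ := hr
  have hs2 : Real.sqrt (1 - r ^ 2) ^ 2 = 1 - r ^ 2 := by
    rw [Real.sq_sqrt]; nlinarith
  have hs : (0:ℝ) < Real.sqrt (1 - r ^ 2) := by
    apply Real.sqrt_pos.2; nlinarith
  set s := Real.sqrt (1 - r ^ 2) with hsdef
  have hn : ∀ x : E7,
      nu r x 0 = (r/s) * x 0 ∧ nu r x 1 = (r/s) * x 1 ∧ nu r x 2 = (r/s) * x 2 ∧
      nu r x 3 = (r/s) * x 3 ∧ nu r x 4 = (r/s) * x 4 ∧ nu r x 5 = (r/s) * x 5 ∧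
      nu r x 6 = -s := by
    intro x; refine ⟨?_, ?_, ?_, ?_, ?_, ?_, ?_⟩ <;> simp [nu, hsdef]
  have hxiv : ∀ x : E7,
      xi r x 0 = (1/s) * x 5 ∧ xi r x 1 = (1/s) * x 4 ∧ xi r x 2 = (1/s) * x 3 ∧
      xi r x 3 = (1/s) * (-x 2) ∧ xi r x 4 = (1/s) * (-x 1) ∧ xi r x 5 = (1/s) * (-x 0) ∧
      xi r x 6 = 0 := by
    intro x; refine ⟨?_, ?_, ?_, ?_, ?_, ?_, ?_⟩ <;> simp [xi, hsdef]
  constructor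
  · rintro x ⟨hx6, hxsum⟩ X ⟨hX6, hXx⟩
    simp only [PiLp.inner_apply, RCLike.inner_apply, starRingEnd_apply, star_trivial,
      Fin.sum_univ_seven] at hXx
    simp only [Fin.sum_univ_six,
      show ((0:Fin 6).castSucc : Fin 7) = 0 from rfl,
      show ((1:Fin 6).castSucc : Fin 7) = 1 from rfl,
      show ((2:Fin 6).castSucc : Fin 7) = 2 from rfl,
      show ((3:Fin 6).castSucc : Fin 7) = 3 from rfl,
      show ((4:Fin 6).castSucc : Fin 7) = 4 from rfl,
      show ((5:Fin 6).castSucc : Fin 7) = 5 from rfl] at hxsum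
    have hxsum' : x 0 ^ 2 + x 1 ^ 2 + x 2 ^ 2 + x 3 ^ 2 + x 4 ^ 2 + x 5 ^ 2
        = 1 - r ^ 2 := hxsum
    obtain ⟨hn0, hn1, hn2, hn3, hn4, hn5, hn6⟩ := hn x
    obtain ⟨hx0, hx1, hx2, hx3, hx4, hx5, hxi6⟩ := hxiv x
    have hinner : ⟪nu r x, X⟫ = 0 := by
      simp only [PiLp.inner_apply, RCLike.inner_apply, starRingEnd_apply, star_trivial,
        Fin.sum_univ_seven, hn0, hn1, hn2, hn3, hn4, hn5, hn6, hX6]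
      have hsne : s ≠ 0 := ne_of_gt hs
      field_simp
      linear_combination r * hXx - r * x 6 * hX6
    have hsne : s ≠ 0 := ne_of_gt hs
    have k0 : cross (nu r x) (xi r x) 0 = (-x) 0 := by
      rw [cross_apply0, hn1, hn2, hn3, hn4, hn5, hn6, hx1, hx2, hx3, hx4, hx5, hxi6,
        PiLp.neg_apply]
      field_simp; ring
    have k1 : cross (nu r x) (xi r x) 1 = (-x) 1 := by
      rw [cross_apply1, hn0, hn2, hn3, hn4, hn5, hn6, hx0, hx2, hx3, hx4, hx5, hxi6,
        PiLp.neg_apply]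
      field_simp; ring
    have k2 : cross (nu r x) (xi r x) 2 = (-x) 2 := by
      rw [cross_apply2, hn0, hn1, hn3, hn4, hn5, hn6, hx0, hx1, hx3, hx4, hx5, hxi6,
        PiLp.neg_apply]
      field_simp; ring
    have k3 : cross (nu r x) (xi r x) 3 = (-x) 3 := by
      rw [cross_apply3, hn0, hn1, hn2, hn4, hn5, hn6, hx0, hx1, hx2, hx4, hx5, hxi6,
        PiLp.neg_apply]
      field_simp; ring
    have k4 : cross (nu r x) (xi r x) 4 = (-x) 4 := by
      rw [cross_apply4, hn0, hn1, hn2, hn3, hn5, hn6, hx0, hx1, hx2, hx3, hx5, hxi6,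
        PiLp.neg_apply]
      field_simp; ring
    have k5 : cross (nu r x) (xi r x) 5 = (-x) 5 := by
      rw [cross_apply5, hn0, hn1, hn2, hn3, hn4, hn6, hx0, hx1, hx2, hx3, hx4, hxi6,
        PiLp.neg_apply]
      field_simp; ring
    have k6 : cross (nu r x) (xi r x) 6 = (-x) 6 := by
      rw [cross_apply6, hn0, hn1, hn2, hn3, hn4, hn5, hx0, hx1, hx2, hx3, hx4, hx5,
        PiLp.neg_apply, hx6]
      field_simp
      linear_combination -r * hxsum' + r * hs2
    have hkey : cross (nu r x) (xi r x) = -x := by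
      ext k
      fin_cases k
      · exact k0
      · exact k1
      · exact k2
      · exact k3
      · exact k4
      · exact k5
      · exact k6
    have hvec : -cross (nu r x) (X - eta r x X • xi r x)
        = -cross (nu r x) X - eta r x X • x := by
      rw [cross_sub, cross_smul, hkey]
      module
    have homul : omul (0, nu r x) (0, X)
        = (-⟪nu r x, X⟫, cross (nu r x) X) := by
      simp only [omul, zero_mul, zero_sub, zero_smul, zero_add, add_zero]
    rw [homul, Prod.neg_mk, Prod.smul_mk, Prod.mk_sub_mk, hinner, Prod.mk.injEq]
    refine ⟨by simp, ?_⟩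
    rw [hvec]
  · refine ⟨WithLp.toLp 2 (fun i => if i = 0 then s else if i = 6 then r else 0), ⟨rfl, ?_⟩,
      WithLp.toLp 2 (fun i => if i = 1 then 1 else 0), ⟨rfl, ?_⟩, ?_, ?_⟩
    · simp only [Fin.sum_univ_six,
        show ((0:Fin 6).castSucc : Fin 7) = 0 from rfl,
        show ((1:Fin 6).castSucc : Fin 7) = 1 from rfl,
        show ((2:Fin 6).castSucc : Fin 7) = 2 from rfl,
        show ((3:Fin 6).castSucc : Fin 7) = 3 from rfl,
        show ((4:Fin 6).castSucc : Fin 7) = 4 from rfl,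
        show ((5:Fin 6).castSucc : Fin 7) = 5 from rfl]
      simp [hs2]
    · simp [PiLp.inner_apply, Fin.sum_univ_seven]
    · simp [PiLp.inner_apply, Fin.sum_univ_seven, xi]
    · intro h
      have h2 := congrArg (fun v : E7 => v (2 : Fin 7)) h
      have h4 := congrArg (fun v : E7 => v (4 : Fin 7)) h
      simp only [phi, PiLp.sub_apply, PiLp.smul_apply, PiLp.neg_apply, smul_eq_mul,
        cross_apply2, cross_apply4, nu, xi, eta] at h2 h4
      simp only [show ((0:Fin 7) = 1) = False from by decide,
        show ((0:Fin 7) = 2) = False from by decide,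
        show ((0:Fin 7) = 3) = False from by decide,
        show ((0:Fin 7) = 4) = False from by decide,
        show ((0:Fin 7) = 5) = False from by decide,
        show ((0:Fin 7) = 6) = False from by decide,
        show ((1:Fin 7) = 0) = False from by decide,
        show ((1:Fin 7) = 2) = False from by decide,
        show ((1:Fin 7) = 3) = False from by decide,
        show ((1:Fin 7) = 4) = False from by decide,
        show ((1:Fin 7) = 5) = False from by decide,
        show ((1:Fin 7) = 6) = False from by decide,
        show ((2:Fin 7) = 0) = False from by decide,
        show ((2:Fin 7) = 1) = False from by decide,
        show ((2:Fin 7) = 3) = False from by decide,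
        show ((2:Fin 7) = 4) = False from by decide,
        show ((2:Fin 7) = 5) = False from by decide,
        show ((2:Fin 7) = 6) = False from by decide,
        show ((3:Fin 7) = 0) = False from by decide,
        show ((3:Fin 7) = 1) = False from by decide,
        show ((3:Fin 7) = 2) = False from by decide,
        show ((3:Fin 7) = 4) = False from by decide,
        show ((3:Fin 7) = 5) = False from by decide,
        show ((3:Fin 7) = 6) = False from by decide,
        show ((4:Fin 7) = 0) = False from by decide,
        show ((4:Fin 7) = 1) = False from by decide,
        show ((4:Fin 7) = 2) = False from by decide,
        show ((4:Fin 7) = 3) = False from by decide,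
        show ((4:Fin 7) = 5) = False from by decide,
        show ((4:Fin 7) = 6) = False from by decide,
        show ((5:Fin 7) = 0) = False from by decide,
        show ((5:Fin 7) = 1) = False from by decide,
        show ((5:Fin 7) = 2) = False from by decide,
        show ((5:Fin 7) = 3) = False from by decide,
        show ((5:Fin 7) = 4) = False from by decide,
        show ((5:Fin 7) = 6) = False from by decide,
        show ((6:Fin 7) = 0) = False from by decide,
        show ((6:Fin 7) = 1) = False from by decide,
        show ((6:Fin 7) = 2) = False from by decide,
        show ((6:Fin 7) = 3) = False from by decide,
        show ((6:Fin 7) = 4) = False from by decide,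
        show ((6:Fin 7) = 5) = False from by decide] at h2 h4
      norm_num at h2 h4
      simp only [← hsdef] at h2 h4
      rw [div_mul_cancel₀ r (ne_of_gt hs)] at h2
      linarith
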